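/- A smooth projective toric variety X_Σ is a Fano variety (i.e., −K_X is ample) if and only if Δ(P) > 0 for every primitive collection P of Σ. -/

import Mathlib

/-!
Statement 5:  A smooth projective toric variety `X_Σ` is Fano (i.e. `-K_X` is ample) if and
only if `Δ(P) > 0` for every primitive collection `P` of `Σ`.

Modelling: the fan is axiomatized in `SmoothCompleteFan`, projectivity in `IsProjective`.
The Fano condition (`IsFano`) is the standard toric criterion for ampleness of
`-K_X = ∑ᵢ Dᵢ`: its support function (taking the value `1` on each minimal ray generator) is
strictly convex.  For a primitive collection `P` with primitive relation
`∑_{i ∈ P} v_i = ∑_{j ∈ σ_P} c_j v_j` (`c_j` positive integers), the degree is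
`Δ(P) = |P| - ∑_j c_j`.  (Since the generators of a cone of a smooth fan are linearly
independent, a representation of `∑_{i ∈ P} v_i` with strictly positive coefficients on a
cone of `Σ` is automatically the primitive relation — the minimal cone `σ_P` is the support
of the coefficients — so it is not necessary to impose minimality of `σ_P` below.)
-/

open Finset

/-- Rational dot product on `Fin n → ℚ`. -/
def dotQ {n : ℕ} (u x : Fin n → ℚ) : ℚ := ∑ k, u k * x k

/-- `InCone v s x`: the point `x` lies in the convex cone generated by the rays `v i`,
`i ∈ s`. -/
def InCone {n d : ℕ} (v : Fin d → Fin n → ℤ) (s : Finset (Fin d)) (x : Fin n → ℚ) : Prop :=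
  ∃ c : Fin d → ℚ, (∀ i, 0 ≤ c i) ∧ (∀ i ∉ s, c i = 0) ∧ ∀ k, x k = ∑ i, c i * (v i k : ℚ)

/-- A smooth complete fan `Σ` in `N_ℝ ≅ ℝⁿ` (lattice `N = ℤⁿ`), i.e. the combinatorial datum
of a smooth complete toric variety `X = X_Σ` of dimension `n`.  A smooth fan is simplicial, so
a cone of `Σ` is recorded by the finite set of (indices of) its minimal generators: `cone s`
means that the rays `v i`, `i ∈ s`, span a cone of `Σ`. -/
structure SmoothCompleteFan (n : ℕ) where
  /-- the number of rays of `Σ` -/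
  d : ℕ
  /-- the minimal generators `v₁, …, v_d` of the rays of `Σ` -/
  v : Fin d → Fin n → ℤ
  /-- `cone s` iff the rays indexed by `s` span a cone of `Σ` -/
  cone : Finset (Fin d) → Prop
  /-- each `v i` is a primitive lattice vector -/
  primitive : ∀ i, ∀ m : ℤ, (∀ k, m ∣ v i k) → IsUnit m
  /-- the rays are pairwise distinct -/
  inj : Function.Injective v
  /-- the zero cone belongs to `Σ` -/
  cone_empty : cone ∅
  /-- every ray belongs to `Σ` -/
  cone_ray : ∀ i, cone {i}
  /-- `Σ` is closed under passing to faces -/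
  cone_mono : ∀ {s t : Finset (Fin d)}, cone t → s ⊆ t → cone s
  /-- every cone is a face of a full-dimensional cone -/
  le_maximal : ∀ s, cone s → ∃ t, cone t ∧ s ⊆ t ∧ t.card = n
  /-- smoothness: the generators of each full-dimensional cone form a basis of `N = ℤⁿ` -/
  smooth : ∀ s, cone s → s.card = n → ∀ x : Fin n → ℤ,
      ∃ c : Fin d → ℤ, (∀ i ∉ s, c i = 0) ∧ ∀ k, x k = ∑ i, c i * v i k
  /-- completeness: the cones of `Σ` cover `N_ℝ` -/
  complete : ∀ x : Fin n → ℚ, ∃ s, cone s ∧ InCone v s x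
  /-- fan condition: two cones of `Σ` meet along their common face -/
  inter : ∀ s t x, cone s → cone t → InCone v s x → InCone v t x → InCone v (s ∩ t) x

namespace SmoothCompleteFan

variable {n : ℕ} (F : SmoothCompleteFan n)

/-- The ray generators viewed as rational vectors. -/
def vQ (i : Fin F.d) : Fin n → ℚ := fun k => (F.v i k : ℚ)

/-- The toric variety `X_Σ` is projective iff `Σ` admits a strictly convex support function,
i.e. iff some divisor `∑ aᵢ Dᵢ` is ample:  on each maximal cone the support function is given
by a linear form `u` with `⟨u, vᵢ⟩ = aᵢ` for the rays of the cone and `⟨u, vⱼ⟩ < aⱼ` for all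
other rays. -/
def IsProjective : Prop :=
  ∃ a : Fin F.d → ℚ, ∀ s, F.cone s → s.card = n →
    ∃ u : Fin n → ℚ, (∀ i ∈ s, dotQ u (F.vQ i) = a i) ∧ ∀ j ∉ s, dotQ u (F.vQ j) < a j

/-- The toric variety `X_Σ` is Fano iff the anticanonical divisor `-K_X = ∑ᵢ Dᵢ` is ample,
i.e. iff its support function (which takes the value `1` on every ray generator) is strictly
convex. -/
def IsFano : Prop :=
  ∀ s, F.cone s → s.card = n →
    ∃ u : Fin n → ℚ, (∀ i ∈ s, dotQ u (F.vQ i) = 1) ∧ ∀ j ∉ s, dotQ u (F.vQ j) < 1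

end SmoothCompleteFan

/-- `P` is a primitive collection of `Σ`: it is not contained in any cone of `Σ` (i.e. does
not span a cone), but each of its proper subsets is. -/
def IsPrimitiveCollection {n : ℕ} (F : SmoothCompleteFan n) (P : Finset (Fin F.d)) : Prop :=
  ¬ F.cone P ∧ ∀ s ⊂ P, F.cone s

/-! ### Auxiliary development -/

namespace FanoAux

open SmoothCompleteFan

/-- Clearing denominators. -/
lemma den_clear (q : ℚ) (D : ℕ) (h : q.den ∣ D) :
    ((q.num * ((D / q.den : ℕ) : ℤ) : ℤ) : ℚ) = (D : ℚ) * q := by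
  obtain ⟨e, rfl⟩ := h
  have hd : 0 < q.den := q.pos
  have hd' : (q.den : ℚ) ≠ 0 := by exact_mod_cast hd.ne'
  have h1 : (q.num : ℚ) = q * q.den := (div_eq_iff hd').mp (Rat.num_div_den q)
  rw [Nat.mul_div_cancel_left _ hd]
  push_cast
  rw [h1]; ring

/-- Bilinearity of `dotQ` in the second variable: representation over `univ`. -/
lemma dotQ_sum_univ {n d : ℕ} (u : Fin n → ℚ) (c : Fin d → ℚ) (w : Fin d → Fin n → ℚ) :
    dotQ u (fun k => ∑ i, c i * w i k) = ∑ i, c i * dotQ u (w i) := by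
  simp only [dotQ, Finset.mul_sum]
  rw [Finset.sum_comm]
  exact Finset.sum_congr rfl fun i _ => Finset.sum_congr rfl fun k _ => by ring

/-- Bilinearity of `dotQ`: sum over a finset. -/
lemma dotQ_sum_fin {n d : ℕ} (u : Fin n → ℚ) (P : Finset (Fin d)) (w : Fin d → Fin n → ℚ) :
    dotQ u (fun k => ∑ i ∈ P, w i k) = ∑ i ∈ P, dotQ u (w i) := by
  simp only [dotQ, Finset.mul_sum]
  rw [Finset.sum_comm]

variable {n : ℕ} (F : SmoothCompleteFan n)

/-- The rays of a maximal cone span `ℚⁿ`. -/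
lemma maxSpan {s : Finset (Fin F.d)} (hs : F.cone s) (hcard : s.card = n) :
    ⊤ ≤ Submodule.span ℚ (Set.range fun i : s => F.vQ i) := by
  rintro x -
  set D : ℕ := ∏ k, (x k).den with hD
  have hdvd : ∀ k, (x k).den ∣ D := fun k => Finset.dvd_prod_of_mem _ (Finset.mem_univ k)
  have hD0 : (D : ℚ) ≠ 0 := by
    have : 0 < D := Finset.prod_pos fun k _ => (x k).pos
    exact_mod_cast this.ne'
  set z : Fin n → ℤ := fun k => (x k).num * ((D / (x k).den : ℕ) : ℤ) with hzdef
  have hz : ∀ k, (z k : ℚ) = D * x k := fun k => den_clear _ _ (hdvd k)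
  obtain ⟨c, hc0, hcrep⟩ := F.smooth s hs hcard z
  have hx : x = ∑ i ∈ s.attach, ((c i : ℚ) / D) • F.vQ i := by
    funext k
    rw [Finset.sum_apply]
    have h1 : ∑ i ∈ s.attach, (((c i : ℚ) / D) • F.vQ i) k
        = (1 / D) * ∑ i ∈ s, (c i : ℚ) * F.vQ i k := by
      rw [Finset.mul_sum, ← Finset.sum_attach s (fun i => (1:ℚ)/D * ((c i : ℚ) * F.vQ i k))]
      refine Finset.sum_congr rfl fun i _ => ?_
      simp [Pi.smul_apply, smul_eq_mul]; ring
    have h2 : ∑ i ∈ s, (c i : ℚ) * F.vQ i k = ∑ i, (c i : ℚ) * F.vQ i k :=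
      Finset.sum_subset (Finset.subset_univ s) (fun i _ hi => by rw [hc0 i hi]; simp)
    have h3 : ∑ i, (c i : ℚ) * F.vQ i k = (z k : ℚ) := by
      rw [hcrep k]; push_cast [vQ]; ring_nf
    rw [h1, h2, h3, hz k]
    field_simp
  rw [hx]
  exact Submodule.sum_mem _ fun i _ =>
    Submodule.smul_mem _ _ (Submodule.subset_span ⟨i, rfl⟩)

lemma maxLI {s : Finset (Fin F.d)} (hs : F.cone s) (hcard : s.card = n) :
    LinearIndependent ℚ (fun i : s => F.vQ i) :=
  linearIndependent_of_top_le_span_of_card_eq_finrank (maxSpan F hs hcard)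
    (by rw [Fintype.card_coe, hcard, Module.finrank_fin_fun])

/-- Uniqueness of representation on a maximal cone. -/
lemma maxUnique {s : Finset (Fin F.d)} (hs : F.cone s) (hcard : s.card = n)
    (c c' : Fin F.d → ℚ) (hcs : ∀ i ∉ s, c i = 0) (hc's : ∀ i ∉ s, c' i = 0)
    (heq : ∀ k, ∑ i, c i * F.vQ i k = ∑ i, c' i * F.vQ i k) : c = c' := by
  have li := maxLI F hs hcard
  rw [Fintype.linearIndependent_iff] at li
  have key := li (fun i => c ↑i - c' ↑i) ?_
  · funext i
    by_cases hi : i ∈ s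
    · have := key ⟨i, hi⟩
      simpa [sub_eq_zero] using this
    · rw [hcs i hi, hc's i hi]
  · funext k
    rw [Finset.sum_apply]
    have h1 : ∑ i : s, ((c ↑i - c' ↑i) • F.vQ ↑i) k
        = ∑ i ∈ s, (c i - c' i) * F.vQ i k := by
      rw [← Finset.sum_coe_sort s (fun i => (c i - c' i) * F.vQ i k)]
      exact Finset.sum_congr rfl fun i _ => by simp [smul_eq_mul]
    have h2 : ∑ i ∈ s, (c i - c' i) * F.vQ i k = ∑ i, (c i - c' i) * F.vQ i k :=
      Finset.sum_subset (Finset.subset_univ s)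
        (fun i _ hi => by rw [hcs i hi, hc's i hi]; ring)
    rw [h1, h2]
    simp only [sub_mul, Finset.sum_sub_distrib, heq k, sub_self, Pi.zero_apply]

/-- Uniqueness of a nonnegative representation supported on a cone. -/
lemma coneRep_unique {s t : Finset (Fin F.d)} (hs : F.cone s) (ht : F.cone t)
    (c c' : Fin F.d → ℚ) (hc0 : ∀ i, 0 ≤ c i) (hcs : ∀ i ∉ s, c i = 0)
    (hc'0 : ∀ i, 0 ≤ c' i) (hc't : ∀ i ∉ t, c' i = 0)
    (heq : ∀ k, ∑ i, c i * F.vQ i k = ∑ i, c' i * F.vQ i k) : c = c' := by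
  set x : Fin n → ℚ := fun k => ∑ i, c i * F.vQ i k with hx
  have hxs : InCone F.v s x := ⟨c, hc0, hcs, fun k => rfl⟩
  have hxt : InCone F.v t x := ⟨c', hc'0, hc't, fun k => (heq k)⟩

  obtain ⟨c'', h''0, h''st, h''rep⟩ := F.inter s t x hs ht hxs hxt
  obtain ⟨S, hS, hsS, hScard⟩ := F.le_maximal s hs
  obtain ⟨T, hT, htT, hTcard⟩ := F.le_maximal t ht
  have h1 : c = c'' := by
    refine maxUnique F hS hScard c c'' (fun i hi => hcs i fun h => hi (hsS h))
      (fun i hi => h''st i fun h => hi (hsS (Finset.mem_of_mem_inter_left h))) ?_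
    intro k; exact h''rep k
  have h2 : c' = c'' := by
    refine maxUnique F hT hTcard c' c'' (fun i hi => hc't i fun h => hi (htT h))
      (fun i hi => h''st i fun h => hi (htT (Finset.mem_of_mem_inter_right h))) ?_
    intro k; exact (heq k).symm.trans (h''rep k)
  rw [h1, h2]

/-- Canonical representation of a lattice point: nonnegative integer coefficients,
strictly positive on a cone. -/
lemma exists_canonicalRep (x : Fin n → ℤ) :
    ∃ σ, F.cone σ ∧ ∃ c : Fin F.d → ℕ, (∀ j ∈ σ, 0 < c j) ∧ (∀ j ∉ σ, c j = 0) ∧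
      ∀ k, (x k : ℚ) = ∑ j, (c j : ℚ) * F.vQ j k := by
  obtain ⟨s, hs, cq, hq0, hqs, hqrep⟩ := F.complete (fun k => (x k : ℚ))
  obtain ⟨t, ht, hst, htcard⟩ := F.le_maximal s hs
  obtain ⟨cz, hz0, hzrep⟩ := F.smooth t ht htcard x
  have hqeq : cq = fun i => (cz i : ℚ) := by
    refine maxUnique F ht htcard cq (fun i => (cz i : ℚ))
      (fun i hi => hqs i fun h => hi (hst h))
      (fun i hi => by show ((cz i : ℤ) : ℚ) = 0; rw [hz0 i hi]; simp) ?_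
    intro k
    have h1 : ∑ i, cq i * F.vQ i k = (x k : ℚ) := (hqrep k).symm
    rw [h1, hzrep k]
    push_cast [vQ]
    ring_nf
  have hznn : ∀ i, 0 ≤ cz i := by
    intro i
    have : (0:ℚ) ≤ (cz i : ℚ) := by rw [← congrFun hqeq i]; exact hq0 i
    exact_mod_cast this
  refine ⟨t.filter (fun i => cz i ≠ 0), F.cone_mono ht (Finset.filter_subset _ _),
    fun i => (cz i).toNat, ?_, ?_, ?_⟩
  · intro j hj
    have h1 := (Finset.mem_filter.mp hj).2
    have h2 := hznn j
    show 0 < (cz j).toNat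
    omega
  · intro j hj
    show (cz j).toNat = 0
    by_cases hjt : j ∈ t
    · have h1 : ¬ cz j ≠ 0 := fun h => hj (Finset.mem_filter.mpr ⟨hjt, h⟩)
      omega
    · have := hz0 j hjt
      omega
  · intro k
    have h1 : (x k : ℚ) = ∑ j, cq j * F.vQ j k := hqrep k
    rw [h1, hqeq]
    refine Finset.sum_congr rfl fun j _ => ?_
    have h2 := Int.toNat_of_nonneg (hznn j)
    show ((cz j : ℤ) : ℚ) * _ = (((cz j).toNat : ℕ) : ℚ) * _
    congr 1
    exact_mod_cast h2.symm

/-- For a strictly convex support function `a` and a non-cone set `P` with a representation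
of `∑_{i∈P} vᵢ` supported on a cone, the `a`-degree is positive. -/
lemma deg_lt (a : Fin F.d → ℚ)
    (ha : ∀ s, F.cone s → s.card = n →
      ∃ u, (∀ i ∈ s, dotQ u (F.vQ i) = a i) ∧ ∀ j ∉ s, dotQ u (F.vQ j) < a j)
    (P : Finset (Fin F.d)) (hP : ¬ F.cone P)
    (σ : Finset (Fin F.d)) (hσ : F.cone σ) (c : Fin F.d → ℚ) (hcσ : ∀ j ∉ σ, c j = 0)
    (hrep : ∀ k, (∑ i ∈ P, F.vQ i k) = ∑ j, c j * F.vQ j k) :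
    ∑ j, c j * a j < ∑ i ∈ P, a i := by
  obtain ⟨t, ht, hσt, htcard⟩ := F.le_maximal σ hσ
  obtain ⟨u, hu1, hu2⟩ := ha t ht htcard
  have e1 : ∑ j, c j * a j = ∑ j, c j * dotQ u (F.vQ j) := by
    refine Finset.sum_congr rfl fun j _ => ?_
    by_cases hj : j ∈ t
    · rw [hu1 j hj]
    · rw [hcσ j (fun h => hj (hσt h))]; ring
  have e2 : ∑ j, c j * dotQ u (F.vQ j) = ∑ i ∈ P, dotQ u (F.vQ i) := by
    rw [← dotQ_sum_univ, ← dotQ_sum_fin]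
    congr 1
    funext k
    exact (hrep k).symm
  rw [e1, e2]
  obtain ⟨i₀, hi₀P, hi₀t⟩ := Finset.not_subset.mp
    (fun h : P ⊆ t => hP (F.cone_mono ht h))
  refine Finset.sum_lt_sum (fun i _ => ?_) ⟨i₀, hi₀P, hu2 i₀ hi₀t⟩
  by_cases hi : i ∈ t
  · exact le_of_eq (hu1 i hi)
  · exact (hu2 i hi).le

/-- For a strictly convex support function `a`, any nonnegative combination dominates the
canonical representation in `a`-degree. -/
lemma deg_le (a : Fin F.d → ℚ)
    (ha : ∀ s, F.cone s → s.card = n →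
      ∃ u, (∀ i ∈ s, dotQ u (F.vQ i) = a i) ∧ ∀ j ∉ s, dotQ u (F.vQ j) < a j)
    (m : Fin F.d → ℕ) (σ : Finset (Fin F.d)) (hσ : F.cone σ)
    (c : Fin F.d → ℕ) (hcσ : ∀ j ∉ σ, c j = 0)
    (hrep : ∀ k, ∑ i, (m i : ℚ) * F.vQ i k = ∑ j, (c j : ℚ) * F.vQ j k) :
    ∑ j, (c j : ℚ) * a j ≤ ∑ i, (m i : ℚ) * a i := by
  obtain ⟨t, ht, hσt, htcard⟩ := F.le_maximal σ hσ
  obtain ⟨u, hu1, hu2⟩ := ha t ht htcard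
  have e1 : ∑ j, (c j : ℚ) * a j = ∑ j, (c j : ℚ) * dotQ u (F.vQ j) := by
    refine Finset.sum_congr rfl fun j _ => ?_
    by_cases hj : j ∈ t
    · rw [hu1 j hj]
    · rw [show c j = 0 from hcσ j (fun h => hj (hσt h))]; push_cast; ring
  have e2 : ∑ j, (c j : ℚ) * dotQ u (F.vQ j) = ∑ i, (m i : ℚ) * dotQ u (F.vQ i) := by
    rw [← dotQ_sum_univ, ← dotQ_sum_univ]
    congr 1
    funext k
    exact (hrep k).symm
  rw [e1, e2]
  refine Finset.sum_le_sum fun i _ => ?_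
  refine mul_le_mul_of_nonneg_left ?_ (by positivity)
  by_cases hi : i ∈ t
  · exact le_of_eq (hu1 i hi)
  · exact (hu2 i hi).le

/-- Every non-cone set contains a primitive collection. -/
lemma exists_primitive (S : Finset (Fin F.d)) (hS : ¬ F.cone S) :
    ∃ P ⊆ S, IsPrimitiveCollection F P := by
  classical
  set 𝒮 := S.powerset.filter (fun T => ¬ F.cone T) with h𝒮
  have hSmem : S ∈ 𝒮 := Finset.mem_filter.mpr ⟨Finset.mem_powerset.mpr Finset.Subset.rfl, hS⟩
  obtain ⟨P, hP𝒮, hmin⟩ := Finset.exists_min_image 𝒮 Finset.card ⟨S, hSmem⟩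
  have hPS : P ⊆ S := Finset.mem_powerset.mp (Finset.mem_filter.mp hP𝒮).1
  have hPnc : ¬ F.cone P := (Finset.mem_filter.mp hP𝒮).2
  refine ⟨P, hPS, hPnc, fun T hTP => ?_⟩
  by_contra hTc
  have hT𝒮 : T ∈ 𝒮 := Finset.mem_filter.mpr
    ⟨Finset.mem_powerset.mpr (hTP.subset.trans hPS), hTc⟩
  exact absurd (hmin T hT𝒮) (not_le.mpr (Finset.card_lt_card hTP))


/-- Existence of a linear functional with prescribed values on the rays of a maximal cone. -/
lemma exists_dual {s : Finset (Fin F.d)} (hs : F.cone s) (hcard : s.card = n)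
    (a : Fin F.d → ℚ) :
    ∃ u : Fin n → ℚ, ∀ i ∈ s, dotQ u (F.vQ i) = a i := by
  have li := maxLI F hs hcard
  have sp := maxSpan F hs hcard
  set b : Module.Basis s ℚ (Fin n → ℚ) := Module.Basis.mk li sp with hb
  set f := b.constr ℚ (fun i : s => a ↑i) with hf
  refine ⟨fun k => f (fun j => if k = j then 1 else 0), fun i hi => ?_⟩
  have hfx : ∀ x : Fin n → ℚ,
      dotQ (fun k => f (fun j => if k = j then 1 else 0)) x = f x := by
    intro x
    conv_rhs => rw [pi_eq_sum_univ x]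
    rw [map_sum]
    refine Finset.sum_congr rfl fun k _ => ?_
    rw [map_smul, smul_eq_mul]
    ring
  rw [hfx]
  have hbi : F.vQ i = b ⟨i, hi⟩ := (Module.Basis.mk_apply li sp ⟨i, hi⟩).symm
  rw [hbi, hf]
  exact b.constr_basis ℚ _ _

/-- The key induction: (Batyrev) if every primitive collection has positive degree, then
any nonnegative integer combination of rays dominates the canonical cone representation of
the same lattice point; strictly so if its support is not a cone. -/
lemma key_ind (a : Fin F.d → ℚ)
    (ha : ∀ s, F.cone s → s.card = n →
      ∃ u, (∀ i ∈ s, dotQ u (F.vQ i) = a i) ∧ ∀ j ∉ s, dotQ u (F.vQ j) < a j)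
    (za : Fin F.d → ℤ) (D : ℕ) (hD : 0 < D) (hza : ∀ i, (za i : ℚ) = (D : ℚ) * a i)
    (hΔ : ∀ P : Finset (Fin F.d), IsPrimitiveCollection F P →
        ∀ (σP : Finset (Fin F.d)) (c : Fin F.d → ℕ), F.cone σP → (∀ j ∈ σP, 0 < c j) →
        (∀ k, (∑ i ∈ P, F.v i k) = ∑ j ∈ σP, (c j : ℤ) * F.v j k) →
        0 < (P.card : ℤ) - ∑ j ∈ σP, (c j : ℤ)) :
    ∀ N : ℕ, ∀ m c : Fin F.d → ℕ, ∀ σ : Finset (Fin F.d), F.cone σ → (∀ j ∉ σ, c j = 0) →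
      (∀ k, ∑ i, (m i : ℚ) * F.vQ i k = ∑ j, (c j : ℚ) * F.vQ j k) →
      (∑ i, (m i : ℤ) * za i - ∑ j, (c j : ℤ) * za j).toNat = N →
      (∑ j, c j ≤ ∑ i, m i) ∧
        (¬ F.cone (Finset.univ.filter fun i => m i ≠ 0) → ∑ j, c j < ∑ i, m i) := by
  have hcastM : ∀ w : Fin F.d → ℕ,
      ((∑ i, (w i : ℤ) * za i : ℤ) : ℚ) = D * ∑ i, (w i : ℚ) * a i := by
    intro w
    push_cast
    rw [Finset.mul_sum]
    refine Finset.sum_congr rfl fun i _ => ?_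
    rw [hza i]; ring
  have hDQ : (0 : ℚ) < D := by exact_mod_cast hD
  intro N
  induction N using Nat.strong_induction_on with
  | _ N IH =>
  intro m c σ hσ hcσ hrep hN
  by_cases hsupp : F.cone (Finset.univ.filter fun i => m i ≠ 0)
  · -- the support of `m` is a cone: `m` is itself the canonical representation
    have heq : (fun i => (m i : ℚ)) = fun i => (c i : ℚ) := by
      refine coneRep_unique F hsupp hσ _ _ (fun i => by positivity)
        (fun i hi => ?_) (fun i => by positivity)
        (fun i hi => by rw [hcσ i hi]; simp) hrep
      have h1 : ¬ m i ≠ 0 := fun h => hi (Finset.mem_filter.mpr ⟨Finset.mem_univ i, h⟩)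
      simp only [not_not] at h1
      rw [h1]; simp
    have hmc : ∀ i, m i = c i := fun i => by exact_mod_cast congrFun heq i
    exact ⟨le_of_eq (Finset.sum_congr rfl fun i _ => (hmc i).symm),
      fun h => absurd hsupp h⟩
  · -- find a primitive collection inside the support of `m`
    obtain ⟨P, hPsupp, hPprim⟩ := exists_primitive F _ hsupp
    have hmP : ∀ i ∈ P, 1 ≤ m i := by
      intro i hi
      have := (Finset.mem_filter.mp (hPsupp hi)).2
      omega
    obtain ⟨σP, hσP, p, hppos, hp0, hprep⟩ :=
      exists_canonicalRep F (fun k => ∑ i ∈ P, F.v i k)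
    have hprepZ : ∀ k, (∑ i ∈ P, F.v i k) = ∑ j ∈ σP, (p j : ℤ) * F.v j k := by
      intro k
      have h1 : ((∑ i ∈ P, F.v i k : ℤ) : ℚ) = ((∑ j ∈ σP, (p j : ℤ) * F.v j k : ℤ) : ℚ) := by
        push_cast
        rw [show (∑ j ∈ σP, (p j : ℚ) * (F.v j k : ℚ)) = ∑ j, (p j : ℚ) * (F.v j k : ℚ) from
          Finset.sum_subset (Finset.subset_univ σP) (fun j _ hj => by rw [hp0 j hj]; simp)]
        have h := hprep k
        simp only [vQ] at h
        exact_mod_cast h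
      exact_mod_cast h1
    have hdeg := hΔ P hPprim σP p hσP hppos hprepZ
    have hps : ∑ j, p j < P.card := by
      have h2 : ∑ j ∈ σP, (p j : ℤ) = ((∑ j, p j : ℕ) : ℤ) := by
        push_cast
        exact Finset.sum_subset (Finset.subset_univ σP) (fun j _ hj => by rw [hp0 j hj]; simp)
      rw [h2] at hdeg
      have h3 : ((∑ j, p j : ℕ) : ℤ) < (P.card : ℤ) := by linarith
      exact_mod_cast h3
    have hrepPQ : ∀ k, (∑ i ∈ P, F.vQ i k) = ∑ j, (p j : ℚ) * F.vQ j k := by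
      intro k
      have h := hprep k
      simp only [vQ] at h ⊢
      exact_mod_cast h
    have hdegQ : ∑ j, (p j : ℚ) * a j < ∑ i ∈ P, a i :=
      deg_lt F a ha P hPprim.1 σP hσP _ (fun j hj => by rw [hp0 j hj]; simp) hrepPQ
    set m' : Fin F.d → ℕ := fun i => m i + p i - (if i ∈ P then 1 else 0) with hm'
    have hm'rat : ∀ i, (m' i : ℚ) = (m i : ℚ) + (p i : ℚ) - (if i ∈ P then 1 else 0) := by
      intro i
      by_cases hi : i ∈ P
      · have h1 : 1 ≤ m i + p i := le_trans (hmP i hi) (Nat.le_add_right _ _)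
        simp only [hm', if_pos hi]
        rw [Nat.cast_sub h1]
        push_cast; ring
      · simp [hm', hi]
    have hexpand : ∀ g : Fin F.d → ℚ, ∑ i, (m' i : ℚ) * g i
        = ∑ i, (m i : ℚ) * g i + ∑ i, (p i : ℚ) * g i - ∑ i ∈ P, g i := by
      intro g
      have h1 : ∀ i, (m' i : ℚ) * g i
          = (m i : ℚ) * g i + (p i : ℚ) * g i - (if i ∈ P then g i else 0) := by
        intro i
        rw [hm'rat i]
        by_cases hi : i ∈ P <;> simp [hi] <;> ring
      rw [Finset.sum_congr rfl fun i _ => h1 i, Finset.sum_sub_distrib,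
        Finset.sum_add_distrib, Finset.sum_ite_mem, Finset.univ_inter]
    have hrep' : ∀ k, ∑ i, (m' i : ℚ) * F.vQ i k = ∑ j, (c j : ℚ) * F.vQ j k := by
      intro k
      rw [hexpand (fun i => F.vQ i k)]
      rw [← hrepPQ k, add_sub_cancel_right]
      exact hrep k
    have hsum' : ∑ i, m' i < ∑ i, m i := by
      have hite : ∑ i, (if i ∈ P then 1 else 0) = P.card := by
        rw [Finset.sum_ite_mem, Finset.univ_inter, Finset.sum_const, smul_eq_mul, mul_one]
      have h1 : ∑ i, (m' i + if i ∈ P then 1 else 0) = ∑ i, (m i + p i) := by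
        refine Finset.sum_congr rfl fun i _ => ?_
        by_cases hi : i ∈ P
        · have := hmP i hi
          simp only [hm', if_pos hi]
          omega
        · simp [hm', hi]
      rw [Finset.sum_add_distrib, hite, Finset.sum_add_distrib] at h1
      omega
    set MZ := ∑ i, (m i : ℤ) * za i - ∑ j, (c j : ℤ) * za j with hMZ
    set MZ' := ∑ i, (m' i : ℤ) * za i - ∑ j, (c j : ℤ) * za j with hMZ'
    have hMZ'nn : 0 ≤ MZ' := by
      have h1 := deg_le F a ha m' σ hσ c hcσ hrep'
      have h2 : ((MZ' : ℤ) : ℚ) = D * ∑ i, (m' i : ℚ) * a i - D * ∑ j, (c j : ℚ) * a j := by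
        rw [hMZ', Int.cast_sub, hcastM m', hcastM c]
      have h3 : (0 : ℚ) ≤ ((MZ' : ℤ) : ℚ) := by
        rw [h2]
        nlinarith [h1]
      exact_mod_cast h3
    have hMZlt : MZ' < MZ := by
      have h2 : ((MZ : ℤ) : ℚ) - ((MZ' : ℤ) : ℚ)
          = D * (∑ i ∈ P, a i - ∑ j, (p j : ℚ) * a j) := by
        rw [hMZ, hMZ', Int.cast_sub, Int.cast_sub, hcastM m, hcastM m', hcastM c,
          hexpand a]
        ring
      have h4 : (0 : ℚ) < (D : ℚ) * (∑ i ∈ P, a i - ∑ j, (p j : ℚ) * a j) :=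
        mul_pos hDQ (sub_pos.mpr hdegQ)
      have h3 : ((MZ' : ℤ) : ℚ) < ((MZ : ℤ) : ℚ) := by linarith
      exact_mod_cast h3
    have hMZpos : 0 < MZ := lt_of_le_of_lt hMZ'nn hMZlt
    have hlt : MZ'.toNat < N := by
      rw [← hN]
      exact (Int.toNat_lt_toNat hMZpos).mpr hMZlt
    obtain ⟨hle, -⟩ := IH MZ'.toNat hlt m' c σ hσ hcσ hrep' rfl
    exact ⟨hle.trans hsum'.le, fun _ => lt_of_le_of_lt hle hsum'⟩

end FanoAux

/-- **A smooth projective toric variety is Fano iff every primitive collection has positive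
degree:** `-K_X` ample `↔` `Δ(P) = |P| - ∑_j c_j > 0` for every primitive collection `P`
with primitive relation `∑_{i ∈ P} v_i = ∑_{j ∈ σ_P} c_j v_j`. -/
theorem isFano_iff_primitive_degrees_positive
    {n : ℕ} (F : SmoothCompleteFan n) (hproj : F.IsProjective) :
    F.IsFano ↔
      ∀ P : Finset (Fin F.d), IsPrimitiveCollection F P →
        ∀ (σP : Finset (Fin F.d)) (c : Fin F.d → ℕ),
          F.cone σP →
          (∀ j ∈ σP, 0 < c j) →
          (∀ k, (∑ i ∈ P, F.v i k) = ∑ j ∈ σP, (c j : ℤ) * F.v j k) →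
          0 < (P.card : ℤ) - ∑ j ∈ σP, (c j : ℤ) := by
  constructor
  · -- easy direction: Fano implies positive degrees
    intro hFano P hPprim σP c hσP hcpos hrep
    set c' : Fin F.d → ℚ := fun j => if j ∈ σP then (c j : ℚ) else 0 with hc'
    have hrepQ : ∀ k, (∑ i ∈ P, F.vQ i k) = ∑ j, c' j * F.vQ j k := by
      intro k
      have h1 : ∑ j, c' j * F.vQ j k = ∑ j ∈ σP, (c j : ℚ) * F.vQ j k := by
        simp only [hc', ite_mul, zero_mul]
        rw [Finset.sum_ite_mem, Finset.univ_inter]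
      rw [h1]
      simp only [SmoothCompleteFan.vQ]
      exact_mod_cast hrep k
    have hlt := FanoAux.deg_lt F (fun _ => (1:ℚ)) hFano P hPprim.1 σP hσP c'
      (fun j hj => by simp [hc', hj]) hrepQ
    simp only [mul_one] at hlt
    have h2 : ∑ j, c' j = ∑ j ∈ σP, (c j : ℚ) := by
      simp only [hc']
      rw [Finset.sum_ite_mem, Finset.univ_inter]
    have h3 : ∑ i ∈ P, (1:ℚ) = (P.card : ℚ) := by simp
    rw [h2, h3] at hlt
    have h4 : (∑ j ∈ σP, (c j : ℤ)) < (P.card : ℤ) := by exact_mod_cast hlt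
    linarith
  · -- hard direction: positive degrees imply Fano
    intro hΔ s hs hcard
    obtain ⟨a, ha⟩ := hproj
    set D : ℕ := ∏ i, (a i).den with hDdef
    have hdvd : ∀ i, (a i).den ∣ D := fun i => Finset.dvd_prod_of_mem _ (Finset.mem_univ i)
    have hD : 0 < D := Finset.prod_pos fun i _ => (a i).pos
    set za : Fin F.d → ℤ := fun i => (a i).num * ((D / (a i).den : ℕ) : ℤ) with hzadef
    have hza : ∀ i, (za i : ℚ) = (D : ℚ) * a i := fun i => FanoAux.den_clear _ _ (hdvd i)
    obtain ⟨u, hu1⟩ := FanoAux.exists_dual F hs hcard (fun _ => (1:ℚ))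
    refine ⟨u, fun i hi => hu1 i hi, ?_⟩
    intro j hj
    obtain ⟨b, hb0, hbrep⟩ := F.smooth s hs hcard (F.v j)
    have hval : dotQ u (F.vQ j) = ∑ i, (b i : ℚ) * dotQ u (F.vQ i) := by
      have hx : F.vQ j = fun k => ∑ i, (b i : ℚ) * F.vQ i k := by
        funext k
        simp only [SmoothCompleteFan.vQ]
        exact_mod_cast hbrep k
      rw [hx]
      exact FanoAux.dotQ_sum_univ u _ _
    have hval2 : ∑ i, (b i : ℚ) * dotQ u (F.vQ i) = ∑ i, (b i : ℚ) := by
      refine Finset.sum_congr rfl fun i _ => ?_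
      by_cases hi : i ∈ s
      · rw [hu1 i hi]; ring
      · rw [hb0 i hi]; simp
    set bp : Fin F.d → ℕ := fun i => (b i).toNat with hbp
    set bn : Fin F.d → ℕ := fun i => (-(b i)).toNat with hbn
    set m : Fin F.d → ℕ := fun i => (if i = j then 1 else 0) + bn i with hm
    have hbj : b j = 0 := hb0 j hj
    have hpn : ∀ i, (bp i : ℤ) - (bn i : ℤ) = b i := by
      intro i
      simp only [hbp, hbn]
      omega
    have hcsupp : ∀ i ∉ s, bp i = 0 := by
      intro i hi
      have := hb0 i hi
      simp [hbp, this]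
    have hZ : ∀ k, ∑ i, (m i : ℤ) * F.v i k = ∑ i, (bp i : ℤ) * F.v i k := by
      intro k
      have h1 : ∑ i, (bp i : ℤ) * F.v i k - ∑ i, (bn i : ℤ) * F.v i k = F.v j k := by
        rw [← Finset.sum_sub_distrib,
          Finset.sum_congr rfl fun i _ => by rw [← sub_mul, hpn i]]
        exact (hbrep k).symm
      have h2 : ∑ i, (m i : ℤ) * F.v i k
          = ∑ i, (if i = j then (1:ℤ) else 0) * F.v i k + ∑ i, (bn i : ℤ) * F.v i k := by
        rw [← Finset.sum_add_distrib]
        refine Finset.sum_congr rfl fun i _ => ?_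
        simp only [hm]
        by_cases hij : i = j <;> simp [hij] <;> push_cast <;> ring
      have h3 : ∑ i, (if i = j then (1:ℤ) else 0) * F.v i k = F.v j k := by
        simp only [ite_mul, one_mul, zero_mul]
        rw [Finset.sum_ite_eq' Finset.univ j (fun i => (F.v i k : ℤ))]
        simp
      rw [h2, h3]
      linarith
    have hrepQm : ∀ k, ∑ i, (m i : ℚ) * F.vQ i k = ∑ i, (bp i : ℚ) * F.vQ i k := by
      intro k
      have h := hZ k
      simp only [SmoothCompleteFan.vQ]
      exact_mod_cast h
    have hsuppm : ¬ F.cone (Finset.univ.filter fun i => m i ≠ 0) := by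
      intro hK
      have heq := FanoAux.coneRep_unique F hK hs (fun i => (m i : ℚ)) (fun i => (bp i : ℚ))
        (fun i => by positivity)
        (fun i hi => by
          have h1 : ¬ m i ≠ 0 := fun h => hi (Finset.mem_filter.mpr ⟨Finset.mem_univ i, h⟩)
          simp only [not_not] at h1
          show (m i : ℚ) = 0
          rw [h1]; simp)
        (fun i => by positivity)
        (fun i hi => by show (bp i : ℚ) = 0; rw [hcsupp i hi]; simp) hrepQm
      have h1 : (m j : ℚ) = (bp j : ℚ) := congrFun heq j
      have h2 : m j = bp j := by exact_mod_cast h1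
      have h3 : m j = 1 := by simp [hm, hbn, hbj]
      have h4 : bp j = 0 := by simp [hbp, hbj]
      omega
    obtain ⟨-, hstrict⟩ := FanoAux.key_ind F a ha za D hD hza hΔ _ m bp s hs hcsupp hrepQm rfl
    have hlt := hstrict hsuppm
    have hsm : ∑ i, m i = 1 + ∑ i, bn i := by
      simp only [hm]
      rw [Finset.sum_add_distrib]
      congr 1
      rw [Finset.sum_ite_eq' Finset.univ j (fun _ => 1)]
      simp
    have hble : (∑ i, (b i : ℤ)) ≤ 0 := by
      have h5 : ∑ i, (b i : ℤ) = ((∑ i, bp i : ℕ) : ℤ) - ((∑ i, bn i : ℕ) : ℤ) := by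
        push_cast
        rw [← Finset.sum_sub_distrib]
        exact Finset.sum_congr rfl fun i _ => (hpn i).symm
      rw [hsm] at hlt
      have h6 : (∑ i, bp i) ≤ ∑ i, bn i := by omega
      have h7 : ((∑ i, bp i : ℕ) : ℤ) ≤ ((∑ i, bn i : ℕ) : ℤ) := by exact_mod_cast h6
      rw [h5]
      linarith
    rw [hval, hval2]
    have h8 : ((∑ i, b i : ℤ) : ℚ) ≤ 0 := by exact_mod_cast hble
    push_cast at h8
    linarith
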